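/- arXiv:1601.00262 — 7 statements merged into one kernel-verified Lean document; each statement's English description precedes it below -/
import Mathlib

section
/- Let (π_i)_{i∈ι} be a family of groups and G = ∗_i π_i their free product, with canonical injections of_i : π_i →* G. For any two distinct indices i ≠ j and any element g ∈ G, the intersection of the subgroup (of_i).range with the conjugate subgroup g·(of_j).range·g⁻¹ is the trivial subgroup. -/
private def castHom {ι : Type*} (π : ι → Type*) [∀ i, Group (π i)] {k j : ι}
    (h : k = j) : π k →* π j := h ▸ MonoidHom.id (π k)

theorem free_product_factor_inter_conj_distinct_factor_eq_bot
    {ι : Type*} (π : ι → Type*) [∀ i, Group (π i)]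
    (i j : ι) (hij : i ≠ j) (g : Monoid.CoprodI π) :
    (Monoid.CoprodI.of : π i →* Monoid.CoprodI π).range ⊓
      ((Monoid.CoprodI.of : π j →* Monoid.CoprodI π).range.map
        (MulAut.conj g).toMonoidHom) = ⊥ := by
  classical
  set p : Monoid.CoprodI π →* π j :=
    Monoid.CoprodI.lift (fun k =>
      if h : k = j then castHom π h else 1) with hp
  have hpj : ∀ y : π j, p (Monoid.CoprodI.of y) = y := by
    intro y
    rw [hp, Monoid.CoprodI.lift_of, dif_pos rfl]
    rfl
  have hpi : ∀ x : π i, p (Monoid.CoprodI.of x) = 1 := by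
    intro x
    rw [hp, Monoid.CoprodI.lift_of, dif_neg hij]
    rfl
  rw [eq_bot_iff]
  rintro z ⟨⟨x, rfl⟩, w, ⟨y, rfl⟩, hw⟩
  simp only [MulEquiv.coe_toMonoidHom, MulAut.conj_apply] at hw
  have hy : y = 1 := by
    have h1 := congrArg p hw
    rw [hpi, map_mul, map_mul, hpj, map_inv] at h1
    have := congrArg (fun t => (p g)⁻¹ * t * p g) h1.symm
    simpa [mul_assoc] using this.symm
  subst hy
  simp only [map_one, one_mul] at hw ⊢
  rw [← hw]
  simp
end

section
/- Let (π_i)_{i∈ι} be a family of groups and G = ∗_i π_i their free product, with canonical injections of_i : π_i →* G. If for some index i and some g ∈ G the intersection of (of_i).range with the conjugate g·(of_i).range·g⁻¹ is a nontrivial subgroup, then g ∈ (of_i).range, and consequently g·(of_i).range·g⁻¹ = (of_i).range. -/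
open Monoid CoprodI

namespace FPAux

variable {ι : Type*} {π : ι → Type*} [∀ i, Group (π i)]
variable [DecidableEq ι] [∀ i, DecidableEq (π i)]

omit [DecidableEq ι] [∀ i, DecidableEq (π i)] in
lemma neword_inv_length {i j : ι} (u : NeWord π i j) :
    u.inv.toList.length = u.toList.length := by
  induction u with
  | singleton x h => rfl
  | append w₁ h w₂ ih₁ ih₂ => simp [NeWord.inv, ih₁, ih₂]; omega

omit [DecidableEq ι] [∀ i, DecidableEq (π i)] in
lemma cons_decomp (w : Word π) {j : ι} {c : π j} {rest : List (Σ i, π i)}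
    (hl : w.toList = ⟨j, c⟩ :: rest) :
    ∃ t : Word π, t.toList = rest ∧ w.prod = of c * t.prod := by
  refine ⟨⟨rest, ?_, ?_⟩, rfl, ?_⟩
  · intro l hl'
    exact w.ne_one l (hl ▸ List.mem_cons_of_mem _ hl')
  · have h2 := w.chain_ne
    rw [hl] at h2
    exact h2.tail
  · show Word.prod w = _
    simp only [Word.prod, hl, List.map_cons, List.prod_cons]

lemma equiv_prod (w : Word π) : Word.equiv w.prod = w :=
  Word.equiv.apply_symm_apply w

lemma prod_ne_of {i j k : ι} (v : NeWord π j k) (hj : j ≠ i) (a : π i) :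
    v.prod ≠ of a := by
  intro h
  by_cases ha : a = 1
  · subst ha
    rw [map_one] at h
    have h2 : v.toWord = Word.empty := Word.equiv.symm.injective h
    have h3 : v.toList = [] := congrArg Word.toList h2
    exact v.toList_ne_nil h3
  · have h2 : v.toWord = (NeWord.singleton a ha).toWord := by
      apply Word.equiv.symm.injective
      show v.prod = (NeWord.singleton a ha).prod
      rw [h, NeWord.prod_singleton]
    have h3 : v.toList = [⟨i, a⟩] := congrArg Word.toList h2
    have h4 := v.toList_head?
    rw [h3] at h4
    simp at h4
    exact hj h4.1.symm

lemma conj_mem_range (i : ι) (g : CoprodI π) (a b : π i) (hb : b ≠ 1)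
    (hconj : g * of b * g⁻¹ = of a) :
    g ∈ (of : π i →* CoprodI π).range := by
  suffices H : ∀ (n : ℕ) (g : CoprodI π), (Word.equiv g).toList.length = n →
      ∀ (a b : π i), b ≠ 1 → g * of b * g⁻¹ = of a →
        g ∈ (of : π i →* CoprodI π).range from H _ g rfl a b hb hconj
  clear hconj hb a b g
  intro n
  induction n using Nat.strong_induction_on with
  | _ n ih =>
  intro g hlen a b hb hconj
  set w := Word.equiv g with hw
  have hgw : g = w.prod := (Word.equiv.symm_apply_apply g).symm
  rcases hl : w.toList with _ | ⟨⟨j, c⟩, rest⟩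
  · have hwe : w = Word.empty := Word.ext hl
    have hge : g = 1 := by rw [hgw, hwe, Word.prod_empty]
    exact hge ▸ one_mem _
  · by_cases hj : j = i
    · subst hj
      obtain ⟨t, htl, hpw⟩ := cons_decomp w hl
      have hg : g = of c * t.prod := by rw [hgw, hpw]
      have h2 : t.prod * of b * t.prod⁻¹ = of (c⁻¹ * a * c) := by
        rw [hg] at hconj
        simp only [map_mul, map_inv]
        rw [← hconj]
        group
      obtain ⟨d, hd⟩ := ih rest.length (by rw [← hlen, hl]; simp) t.prod
        (by rw [equiv_prod, htl]) _ _ hb h2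
      exact ⟨c * d, by rw [map_mul, hd, ← hg]⟩
    · have hwne : w ≠ Word.empty := by
        intro h; rw [h] at hl; exact List.cons_ne_nil _ _ hl.symm
      obtain ⟨j', k, u, hu⟩ := NeWord.of_word w hwne
      have hul : u.toList = w.toList := congrArg Word.toList hu
      have hj' : j' = j := by
        have h4 := u.toList_head?
        rw [hul, hl] at h4
        simp at h4
        exact h4.1.symm
      have hgu : g = u.prod := by rw [hgw, ← hu]; rfl
      by_cases hk : k = i
      · subst hk
        have ha : a ≠ 1 := by
          intro h1
          rw [h1, map_one] at hconj
          have h5 : of b = g⁻¹ * (g * of b * g⁻¹) * g := by group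
          rw [hconj] at h5
          simp at h5
          exact hb (of_injective _ (by rw [h5, map_one]))
        set w' := u.inv.toWord with hw'
        have hginv : g⁻¹ = w'.prod := by rw [hgu, ← NeWord.inv_prod]; rfl
        have hlen' : w'.toList.length = n := by
          show u.inv.toList.length = n
          rw [neword_inv_length, hul]
          exact hlen
        have hhead : w'.toList.head? = some ⟨k, u.inv.head⟩ := u.inv.toList_head?
        rcases hl' : w'.toList with _ | ⟨⟨j₂, c₂⟩, rest'⟩
        · rw [hl'] at hhead; exact absurd hhead.symm (Option.some_ne_none _)
        · have hj₂ : j₂ = k := by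
            rw [hl'] at hhead
            simp at hhead
            exact hhead.1
          subst hj₂
          obtain ⟨t, htl, hpw⟩ := cons_decomp w' hl'
          have hg' : g⁻¹ = of c₂ * t.prod := by rw [hginv, hpw]
          have h3 : g⁻¹ * of a * (g⁻¹)⁻¹ = of b := by rw [← hconj]; group
          rw [hg'] at h3
          have h2 : t.prod * of a * t.prod⁻¹ = of (c₂⁻¹ * b * c₂) := by
            simp only [map_mul, map_inv]
            rw [← h3]
            group
          obtain ⟨d, hd⟩ := ih rest'.length
            (by rw [← hlen', hl']; simp) t.prod
            (by rw [equiv_prod, htl]) _ _ ha h2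
          refine ⟨(c₂ * d)⁻¹, ?_⟩
          rw [map_inv, map_mul, hd, ← hg', inv_inv]
      · exfalso
        have hij' : j' ≠ i := hj' ▸ hj
        let v := NeWord.append (NeWord.append u hk (NeWord.singleton b hb))
          (Ne.symm hk) u.inv
        apply prod_ne_of v hij' a
        show (NeWord.append (NeWord.append u hk (NeWord.singleton b hb))
          (Ne.symm hk) u.inv).prod = of a
        rw [NeWord.append_prod, NeWord.append_prod, NeWord.prod_singleton,
          NeWord.inv_prod, ← hgu, hconj]

end FPAux


theorem free_product_factor_inter_conj_self_nontrivial
    {ι : Type*} (π : ι → Type*) [∀ i, Group (π i)]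
    (i : ι) (g : Monoid.CoprodI π)
    (h : (Monoid.CoprodI.of : π i →* Monoid.CoprodI π).range ⊓
      ((Monoid.CoprodI.of : π i →* Monoid.CoprodI π).range.map
        (MulAut.conj g).toMonoidHom) ≠ ⊥) :
    g ∈ (Monoid.CoprodI.of : π i →* Monoid.CoprodI π).range ∧
      (Monoid.CoprodI.of : π i →* Monoid.CoprodI π).range.map
        (MulAut.conj g).toMonoidHom =
        (Monoid.CoprodI.of : π i →* Monoid.CoprodI π).range := by
  classical
  obtain ⟨⟨x, hx⟩, hx1⟩ := Subgroup.ne_bot_iff_exists_ne_one.mp h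
  rw [Subgroup.mem_inf] at hx
  obtain ⟨⟨a, ha⟩, hx2⟩ := hx
  rw [Subgroup.mem_map] at hx2
  obtain ⟨y, ⟨b, rfl⟩, hy⟩ := hx2
  have hxne : x ≠ 1 := fun h' => hx1 (Subtype.ext h')
  have hbne : b ≠ 1 := by
    rintro rfl
    apply hxne
    rw [← hy]
    simp
  have hconj : g * Monoid.CoprodI.of b * g⁻¹ = Monoid.CoprodI.of a := by
    rw [ha, ← hy]
    simp [MulAut.conj_apply, mul_assoc]
  have hg := FPAux.conj_mem_range i g a b hbne hconj
  refine ⟨hg, ?_⟩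
  obtain ⟨d, hd⟩ := hg
  ext x'
  simp only [Subgroup.mem_map, MonoidHom.mem_range]
  constructor
  · rintro ⟨y', ⟨e, rfl⟩, rfl⟩
    refine ⟨d * e * d⁻¹, ?_⟩
    simp [MulAut.conj_apply, ← hd, map_mul, map_inv]
  · rintro ⟨e, rfl⟩
    refine ⟨Monoid.CoprodI.of (d⁻¹ * e * d), ⟨d⁻¹ * e * d, rfl⟩, ?_⟩
    simp [MulAut.conj_apply, ← hd, map_mul, map_inv]
    group
end

section
/- Let ρ and r be natural numbers and m : Fin r → ℕ a function with m i ≥ 2 for every i, and set E := 2ρ − 2 + ∑_{i : Fin r} (1 − 1/(m i)) as a rational number. If E > 0, then E ≥ 1/42. -/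
private lemma odc {a b : ℕ} (ha : 0 < a) (h : a ≤ b) : (1:ℚ)/b ≤ 1/a := by
  apply one_div_le_one_div_of_le
  · exact_mod_cast ha
  · exact_mod_cast h

private lemma key3_sorted (a b c : ℕ) (ha : 2 ≤ a) (hab : a ≤ b) (hbc : b ≤ c)
    (h : 1/(a:ℚ) + 1/b + 1/c < 1) : 1/(a:ℚ) + 1/b + 1/c ≤ 41/42 := by
  have hb : 2 ≤ b := le_trans ha hab
  have hc : 2 ≤ c := le_trans hb hbc
  have hc0 : (0:ℚ) < c := by exact_mod_cast Nat.lt_of_lt_of_le (by norm_num) hc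
  by_cases h2 : a = 2
  · subst h2
    norm_num at h
    by_cases hb2 : b = 2
    · subst hb2
      have : (0:ℚ) < 1/c := by positivity
      norm_num at h
      linarith
    · by_cases hb3 : b = 3
      · subst hb3
        have h6 : (6:ℚ) < c := by
          have h' : (1:ℚ)/c < 1/6 := by norm_num at h ⊢; linarith
          rw [div_lt_div_iff₀ hc0 (by norm_num)] at h'
          linarith
        have h7 : 7 ≤ c := by exact_mod_cast (by exact_mod_cast h6 : 6 < c)
        have := odc (show 0 < 7 by norm_num) h7
        norm_num at this ⊢
        linarith
      · by_cases hb4 : b = 4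
        · subst hb4
          have h4 : (4:ℚ) < c := by
            have h' : (1:ℚ)/c < 1/4 := by norm_num at h ⊢; linarith
            rw [div_lt_div_iff₀ hc0 (by norm_num)] at h'
            linarith
          have h5 : 5 ≤ c := by exact_mod_cast (by exact_mod_cast h4 : 4 < c)
          have := odc (show 0 < 5 by norm_num) h5
          norm_num at this ⊢
          linarith
        · have hb5 : 5 ≤ b := by omega
          have h1 := odc (show 0 < 5 by norm_num) hb5
          have h2 := odc (show 0 < 5 by norm_num) (le_trans hb5 hbc)
          norm_num at h1 h2 ⊢
          linarith
  · by_cases h3 : a = 3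
    · subst h3
      by_cases hb3 : b = 3
      · subst hb3
        have h3' : (3:ℚ) < c := by
          have h' : (1:ℚ)/c < 1/3 := by norm_num at h ⊢; linarith
          rw [div_lt_div_iff₀ hc0 (by norm_num)] at h'
          linarith
        have h4 : 4 ≤ c := by exact_mod_cast (by exact_mod_cast h3' : 3 < c)
        have := odc (show 0 < 4 by norm_num) h4
        norm_num at this ⊢
        linarith
      · have hb4 : 4 ≤ b := by omega
        have h1 := odc (show 0 < 4 by norm_num) hb4
        have h2 := odc (show 0 < 4 by norm_num) (le_trans hb4 hbc)
        norm_num at h1 h2 ⊢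
        linarith
    · have ha4 : 4 ≤ a := by omega
      have h1 := odc (show 0 < 4 by norm_num) ha4
      have h2 := odc (show 0 < 4 by norm_num) (le_trans ha4 hab)
      have h3 := odc (show 0 < 4 by norm_num) (le_trans ha4 (le_trans hab hbc))
      norm_num at h1 h2 h3 ⊢
      linarith

private lemma key3 (a b c : ℕ) (ha : 2 ≤ a) (hb : 2 ≤ b) (hc : 2 ≤ c)
    (h : 1/(a:ℚ) + 1/b + 1/c < 1) : 1/(a:ℚ) + 1/b + 1/c ≤ 41/42 := by
  rcases le_total a b with h1 | h1 <;> rcases le_total b c with h2 | h2 <;>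
    rcases le_total a c with h3 | h3
  · have := key3_sorted a b c ha h1 h2 (by linarith); linarith
  · have := key3_sorted a b c ha h1 h2 (by linarith); linarith
  · have := key3_sorted a c b ha h3 h2 (by linarith); linarith
  · have := key3_sorted c a b hc h3 h1 (by linarith); linarith
  · have := key3_sorted b a c hb h1 h3 (by linarith); linarith
  · have := key3_sorted b c a hb h2 h3 (by linarith); linarith
  · have := key3_sorted c b a hc h2 h1 (by linarith); linarith
  · have := key3_sorted c b a hc h2 h1 (by linarith); linarith

private lemma key4 (a b c d : ℕ) (ha : 2 ≤ a) (hb : 2 ≤ b) (hc : 2 ≤ c) (hd : 2 ≤ d)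
    (h : 1/(a:ℚ) + 1/b + 1/c + 1/d < 2) : 1/(a:ℚ) + 1/b + 1/c + 1/d ≤ 11/6 := by
  have pa := odc (show 0 < 2 by norm_num) ha
  have pb := odc (show 0 < 2 by norm_num) hb
  have pc := odc (show 0 < 2 by norm_num) hc
  have pd := odc (show 0 < 2 by norm_num) hd
  by_cases hall : a = 2 ∧ b = 2 ∧ c = 2 ∧ d = 2
  · obtain ⟨h1, h2, h3, h4⟩ := hall; subst h1; subst h2; subst h3; subst h4
    norm_num at h
  · rcases Decidable.em (a = 2) with ha2 | ha2
    · rcases Decidable.em (b = 2) with hb2 | hb2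
      · rcases Decidable.em (c = 2) with hc2 | hc2
        · have hd3 : 3 ≤ d := by
            rcases Decidable.em (d = 2) with hd2 | hd2
            · exact absurd ⟨ha2, hb2, hc2, hd2⟩ hall
            · omega
          have := odc (show 0 < 3 by norm_num) hd3
          norm_num at this pa pb pc ⊢; linarith
        · have hc3 : 3 ≤ c := by omega
          have := odc (show 0 < 3 by norm_num) hc3
          norm_num at this pa pb pd ⊢; linarith
      · have hb3 : 3 ≤ b := by omega
        have := odc (show 0 < 3 by norm_num) hb3
        norm_num at this pa pc pd ⊢; linarith
    · have ha3 : 3 ≤ a := by omega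
      have := odc (show 0 < 3 by norm_num) ha3
      norm_num at this pb pc pd ⊢; linarith

theorem riemannHurwitz_positive_ge_one_div_42
    (ρ r : ℕ) (m : Fin r → ℕ) (hm : ∀ i, 2 ≤ m i)
    (E : ℚ) (hE : E = 2 * (ρ : ℚ) - 2 + ∑ i : Fin r, (1 - 1 / (m i : ℚ)))
    (hpos : 0 < E) :
    1 / 42 ≤ E := by
  have hsplit : (∑ i : Fin r, (1 - 1/(m i:ℚ))) = (r:ℚ) - ∑ i : Fin r, 1/(m i:ℚ) := by
    rw [Finset.sum_sub_distrib, Finset.sum_const, Finset.card_univ, Fintype.card_fin,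
      nsmul_eq_mul, mul_one]
  rw [hsplit] at hE
  have hterm : ∀ i, (1:ℚ)/(m i) ≤ 1/2 := fun i => odc (by norm_num) (hm i)
  have htermpos : ∀ i, (0:ℚ) < 1/(m i) := by
    intro i
    have h0 : (0:ℚ) < m i := by exact_mod_cast Nat.lt_of_lt_of_le (by norm_num) (hm i)
    positivity
  have hT1 : (∑ i : Fin r, 1/(m i:ℚ)) ≤ (r:ℚ) * (1/2) := by
    calc (∑ i : Fin r, 1/(m i:ℚ)) ≤ ∑ _i : Fin r, (1/2:ℚ) :=
          Finset.sum_le_sum (fun i _ => hterm i)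
      _ = (r:ℚ) * (1/2) := by
          rw [Finset.sum_const, Finset.card_univ, Fintype.card_fin, nsmul_eq_mul]
  have hT0 : (0:ℚ) ≤ ∑ i : Fin r, 1/(m i:ℚ) :=
    Finset.sum_nonneg (fun i _ => le_of_lt (htermpos i))
  rcases ρ with _ | _ | n
  · -- ρ = 0
    have hr3 : 3 ≤ r := by
      by_contra hcon
      have h2 : (r:ℚ) ≤ 2 := by exact_mod_cast (by omega : r ≤ 2)
      push_cast at hE
      linarith
    rcases r with _ | _ | _ | _ | _ | k
    · omega
    · omega
    · omega
    · -- r = 3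
      rw [Fin.sum_univ_three] at hE
      push_cast at hE
      have hk := key3 (m 0) (m 1) (m 2) (hm 0) (hm 1) (hm 2) (by linarith)
      linarith
    · -- r = 4
      rw [Fin.sum_univ_four] at hE
      push_cast at hE
      have hk := key4 (m 0) (m 1) (m 2) (m 3) (hm 0) (hm 1) (hm 2) (hm 3) (by linarith)
      linarith
    · -- r ≥ 5
      push_cast at hE hT1
      have : (0:ℚ) ≤ (k:ℚ) := by positivity
      linarith
  · -- ρ = 1
    rcases r with _ | k
    · simp at hE
      linarith
    · push_cast at hE hT1
      have : (0:ℚ) ≤ (k:ℚ) := by positivity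
      linarith
  · -- ρ ≥ 2
    push_cast at hE hT1
    have : (0:ℚ) ≤ (n:ℚ) := by positivity
    linarith
end

section
/- Let ρ and r be natural numbers and m : Fin r → ℕ a function with m i ≥ 2 for every i, and set E := 2ρ − 2 + ∑_{i : Fin r} (1 − 1/(m i)) as a rational number. Then E = 1/42 if and only if ρ = 0, r = 3, and the multiset of values {m 0, m 1, m 2} equals the multiset {2, 3, 7}. -/
lemma inv_nat_eq (c : ℕ) (q : ℚ) (hq : 0 < q) (h : 1/(c:ℚ) = q) : (c:ℚ) = 1/q := by
  rw [← h, one_div_one_div]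

lemma ordered_solution (a b c : ℕ) (ha : 2 ≤ a) (hab : a ≤ b) (hbc : b ≤ c)
    (h : (1:ℚ)/a + 1/b + 1/c = 41/42) : a = 2 ∧ b = 3 ∧ c = 7 := by
  have ha0 : (0:ℚ) < a := by exact_mod_cast (by omega : 0 < a)
  have hb0 : (0:ℚ) < b := by exact_mod_cast (by omega : 0 < b)
  have hc0 : (0:ℚ) < c := by exact_mod_cast (by omega : 0 < c)
  have habq : (a:ℚ) ≤ b := by exact_mod_cast hab
  have hbcq : (b:ℚ) ≤ c := by exact_mod_cast hbc
  have h1 : 1/(b:ℚ) ≤ 1/a := one_div_le_one_div_of_le ha0 habq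
  have h2 : 1/(c:ℚ) ≤ 1/b := one_div_le_one_div_of_le hb0 hbcq
  have haub : a ≤ 3 := by
    by_contra hx
    have : (4:ℚ) ≤ a := by exact_mod_cast (by omega : 4 ≤ a)
    have : 1/(a:ℚ) ≤ 1/4 := by
      apply one_div_le_one_div_of_le <;> linarith
    linarith
  interval_cases a
  · -- a = 2
    have hbub : b ≤ 4 := by
      by_contra hx
      have : (5:ℚ) ≤ b := by exact_mod_cast (by omega : 5 ≤ b)
      have : 1/(b:ℚ) ≤ 1/5 := by apply one_div_le_one_div_of_le <;> linarith
      linarith [one_div_pos.mpr hc0]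
    interval_cases b
    · exfalso
      have hcp : (0:ℚ) < (c:ℚ)⁻¹ := inv_pos.mpr hc0
      norm_num at h; linarith
    · refine ⟨rfl, rfl, ?_⟩
      have : (c:ℚ) = 7 := by
        have hc : 1/(c:ℚ) = 1/7 := by norm_num at h ⊢; linarith
        have := inv_nat_eq c (1/7) (by norm_num) hc
        simpa using this
      exact_mod_cast this
    · exfalso
      have hc : 1/(c:ℚ) = 19/84 := by norm_num at h ⊢; linarith
      have := inv_nat_eq c (19/84) (by norm_num) hc
      have : (c:ℚ) = 84/19 := by rw [this]; norm_num
      have h19 : (19:ℚ) * c = 84 := by linarith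
      have : (19 * c : ℕ) = 84 := by exact_mod_cast h19
      omega
  · -- a = 3
    have hbub : b ≤ 3 := by
      by_contra hx
      have : (4:ℚ) ≤ b := by exact_mod_cast (by omega : 4 ≤ b)
      have : 1/(b:ℚ) ≤ 1/4 := by apply one_div_le_one_div_of_le <;> linarith
      linarith
    have hblb : 3 ≤ b := hab
    interval_cases b
    exfalso
    have hc : 1/(c:ℚ) = 13/42 := by norm_num at h ⊢; linarith
    have := inv_nat_eq c (13/42) (by norm_num) hc
    have h13 : (13:ℚ) * c = 42 := by rw [this]; norm_num
    have : (13 * c : ℕ) = 42 := by exact_mod_cast h13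
    omega

lemma term_dichotomy (n : ℕ) (hn : 2 ≤ n) :
    1 - 1/(n:ℚ) = 1/2 ∨ (2:ℚ)/3 ≤ 1 - 1/(n:ℚ) := by
  rcases eq_or_lt_of_le hn with h | h
  · left; rw [← h]; norm_num
  · right
    have h3 : (3:ℚ) ≤ n := by exact_mod_cast h
    have : 1/(n:ℚ) ≤ 1/3 := by apply one_div_le_one_div_of_le <;> linarith
    linarith

theorem riemannHurwitz_eq_one_div_42_iff
    (ρ r : ℕ) (m : Fin r → ℕ) (hm : ∀ i, 2 ≤ m i)
    (E : ℚ) (hE : E = 2 * (ρ : ℚ) - 2 + ∑ i : Fin r, (1 - 1 / (m i : ℚ))) :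
    E = 1 / 42 ↔
      ρ = 0 ∧ r = 3 ∧ Multiset.map m Finset.univ.val = ({2, 3, 7} : Multiset ℕ) := by
  subst hE
  have hterm_lb : ∀ i : Fin r, (1:ℚ)/2 ≤ 1 - 1/(m i) := by
    intro i
    have h2 : (2:ℚ) ≤ m i := by exact_mod_cast hm i
    have : 1/(m i : ℚ) ≤ 1/2 := by apply one_div_le_one_div_of_le <;> linarith
    linarith
  have hterm_ub : ∀ i : Fin r, 1 - 1/(m i : ℚ) ≤ 1 := by
    intro i
    have h2 : (0:ℚ) < m i := by exact_mod_cast (by have := hm i; omega : 0 < m i)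
    have := one_div_pos.mpr h2
    linarith
  constructor
  · intro h
    have hS_lb : (r:ℚ)/2 ≤ ∑ i : Fin r, (1 - 1/(m i : ℚ)) := by
      calc (r:ℚ)/2 = ∑ _i : Fin r, (1:ℚ)/2 := by
            rw [Finset.sum_const, Finset.card_univ, Fintype.card_fin]; push_cast; ring
        _ ≤ _ := Finset.sum_le_sum (fun i _ => hterm_lb i)
    have hS_ub : ∑ i : Fin r, (1 - 1/(m i : ℚ)) ≤ r := by
      calc ∑ i : Fin r, (1 - 1/(m i : ℚ)) ≤ ∑ _i : Fin r, (1:ℚ) :=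
            Finset.sum_le_sum (fun i _ => hterm_ub i)
        _ = r := by rw [Finset.sum_const, Finset.card_univ, Fintype.card_fin]; push_cast; ring
    -- ρ = 0
    have hρ : ρ = 0 := by
      by_contra hρ
      have h1 : 1 ≤ ρ := Nat.one_le_iff_ne_zero.mpr hρ
      have hρ2 : ρ ≤ 1 := by
        by_contra hx
        have : (2:ℚ) ≤ ρ := by exact_mod_cast (by omega : 2 ≤ ρ)
        have h0 : (0:ℚ) ≤ r := by positivity
        linarith
      have hρ1 : ρ = 1 := by omega
      subst hρ1
      -- S = 1/42, but S ≥ r/2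
      have hr0 : r = 0 := by
        by_contra hr
        have : (1:ℚ) ≤ r := by exact_mod_cast Nat.one_le_iff_ne_zero.mpr hr
        linarith
      subst hr0
      simp at h
    subst hρ
    have hS : ∑ i : Fin r, (1 - 1/(m i : ℚ)) = 85/42 := by push_cast at h; linarith
    have hr3 : 3 ≤ r := by
      by_contra hx
      have : (r:ℚ) ≤ 2 := by exact_mod_cast (by omega : r ≤ 2)
      linarith
    have hr4 : r ≤ 4 := by
      by_contra hx
      have : (5:ℚ) ≤ r := by exact_mod_cast (by omega : 5 ≤ r)
      linarith
    interval_cases r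
    · -- r = 3
      refine ⟨rfl, rfl, ?_⟩
      rw [Fin.sum_univ_three] at hS
      have heq : 1/(m 0 : ℚ) + 1/(m 1) + 1/(m 2) = 41/42 := by linarith
      have hmul : Multiset.map m Finset.univ.val = {m 0, m 1, m 2} := rfl
      rw [hmul]
      rcases le_total (m 0) (m 1) with h01 | h01 <;>
        rcases le_total (m 1) (m 2) with h12 | h12 <;>
        rcases le_total (m 0) (m 2) with h02 | h02
      · obtain ⟨e0, e1, e2⟩ := ordered_solution (m 0) (m 1) (m 2) (hm 0) h01 h12
          (by linarith)
        rw [e0, e1, e2]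
      · obtain ⟨e0, e1, e2⟩ := ordered_solution (m 0) (m 1) (m 2) (hm 0) h01 h12
          (by linarith)
        rw [e0, e1, e2]
      · obtain ⟨e0, e1, e2⟩ := ordered_solution (m 0) (m 2) (m 1) (hm 0) h02 h12
          (by linarith)
        rw [e0, e1, e2]; decide
      · obtain ⟨e0, e1, e2⟩ := ordered_solution (m 2) (m 0) (m 1) (hm 2) h02 h01
          (by linarith)
        rw [e0, e1, e2]; decide
      · obtain ⟨e0, e1, e2⟩ := ordered_solution (m 1) (m 0) (m 2) (hm 1) h01 h02
          (by linarith)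
        rw [e0, e1, e2]; decide
      · obtain ⟨e0, e1, e2⟩ := ordered_solution (m 1) (m 2) (m 0) (hm 1) h12 h02
          (by linarith)
        rw [e0, e1, e2]; decide
      · obtain ⟨e0, e1, e2⟩ := ordered_solution (m 2) (m 1) (m 0) (hm 2) h12 h01
          (by linarith)
        rw [e0, e1, e2]; decide
      · obtain ⟨e0, e1, e2⟩ := ordered_solution (m 2) (m 1) (m 0) (hm 2) h12 h01
          (by linarith)
        rw [e0, e1, e2]; decide
    · -- r = 4 : contradiction
      exfalso
      rw [Fin.sum_univ_four] at hS
      rcases term_dichotomy (m 0) (hm 0) with h0 | h0 <;>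
        rcases term_dichotomy (m 1) (hm 1) with h1 | h1 <;>
        rcases term_dichotomy (m 2) (hm 2) with h2 | h2 <;>
        rcases term_dichotomy (m 3) (hm 3) with h3 | h3 <;>
        linarith [hterm_lb 0, hterm_lb 1, hterm_lb 2, hterm_lb 3]
  · rintro ⟨rfl, rfl, hmul⟩
    have hsum : ∑ i : Fin 3, (1 - 1/(m i : ℚ))
        = ((Multiset.map m Finset.univ.val).map (fun n : ℕ => 1 - 1/(n:ℚ))).sum := by
      rw [Multiset.map_map]; rfl
    rw [hsum, hmul]
    norm_num
end

section
/- Let ρ and r be natural numbers and m : Fin r → ℕ a function with m i ≥ 2 for every i, and set E := 2ρ − 2 + ∑_{i : Fin r} (1 − 1/(m i)) as a rational number. If E > 0 and E ≠ 1/42, then E ≥ 1/24. -/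
lemma inv_cast_le {k n : ℕ} (hk : 0 < k) (h : k ≤ n) :
    ((n : ℚ))⁻¹ ≤ ((k : ℚ))⁻¹ := by
  apply inv_anti₀
  · exact_mod_cast hk
  · exact_mod_cast h

lemma key (a b c : ℕ) (ha : 2 ≤ a) (hab : a ≤ b) (hbc : b ≤ c)
    (h1 : ((a : ℚ))⁻¹ + ((b : ℚ))⁻¹ + ((c : ℚ))⁻¹ < 1)
    (h2 : ((a : ℚ))⁻¹ + ((b : ℚ))⁻¹ + ((c : ℚ))⁻¹ ≠ 41 / 42) :
    ((a : ℚ))⁻¹ + ((b : ℚ))⁻¹ + ((c : ℚ))⁻¹ ≤ 23 / 24 := by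
  have hb2 : 2 ≤ b := le_trans ha hab
  have hc2 : 2 ≤ c := le_trans hb2 hbc
  have hcpos : (0 : ℚ) < ((c : ℚ))⁻¹ := by
    apply inv_pos.mpr; exact_mod_cast (by omega : 0 < c)
  rcases le_or_gt 4 a with h4 | h4
  · have hA := inv_cast_le (show 0 < 4 by norm_num) h4
    have hB := inv_cast_le (show 0 < 4 by norm_num) (le_trans h4 hab)
    have hC := inv_cast_le (show 0 < 4 by norm_num) (le_trans (le_trans h4 hab) hbc)
    norm_num at hA hB hC
    linarith
  · interval_cases a
    · -- a = 2
      rcases le_or_gt 5 b with h5 | h5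
      · have hB := inv_cast_le (show 0 < 5 by norm_num) h5
        have hC := inv_cast_le (show 0 < 5 by norm_num) (le_trans h5 hbc)
        norm_num at hB hC ⊢
        linarith
      · interval_cases b
        · -- b = 2
          norm_num at h1
          linarith
        · -- b = 3
          rcases le_or_gt 7 c with h7 | h7
          · rcases eq_or_lt_of_le h7 with he | hgt
            · exfalso; apply h2; rw [← he]; norm_num
            · have h8 : 8 ≤ c := by omega
              have hC := inv_cast_le (show 0 < 8 by norm_num) h8
              norm_num at hC ⊢
              linarith
          · have hC := inv_cast_le (show 0 < c by omega) (show c ≤ 6 by omega)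
            norm_num at hC h1
            linarith
        · -- b = 4
          rcases eq_or_lt_of_le hbc with he | hgt
          · exfalso; rw [← he] at h1; norm_num at h1
          · have h5c : 5 ≤ c := by omega
            have hC := inv_cast_le (show 0 < 5 by norm_num) h5c
            norm_num at hC ⊢
            linarith
    · -- a = 3
      rcases le_or_gt 4 b with h4b | h4b
      · have hB := inv_cast_le (show 0 < 4 by norm_num) h4b
        have hC := inv_cast_le (show 0 < 4 by norm_num) (le_trans h4b hbc)
        norm_num at hB hC ⊢
        linarith
      · interval_cases b
        · rcases le_or_gt 4 c with h4c | h4c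
          · have hC := inv_cast_le (show 0 < 4 by norm_num) h4c
            norm_num at hC ⊢
            linarith
          · have hC := inv_cast_le (show 0 < c by omega) (show c ≤ 3 by omega)
            norm_num at hC h1
            linarith

lemma key' (a b c : ℕ) (ha : 2 ≤ a) (hb : 2 ≤ b) (hc : 2 ≤ c)
    (h1 : ((a : ℚ))⁻¹ + ((b : ℚ))⁻¹ + ((c : ℚ))⁻¹ < 1)
    (h2 : ((a : ℚ))⁻¹ + ((b : ℚ))⁻¹ + ((c : ℚ))⁻¹ ≠ 41 / 42) :
    ((a : ℚ))⁻¹ + ((b : ℚ))⁻¹ + ((c : ℚ))⁻¹ ≤ 23 / 24 := by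
  have H : ∀ x y z : ℕ, 2 ≤ x → x ≤ y → y ≤ z →
      ((x : ℚ))⁻¹ + ((y : ℚ))⁻¹ + ((z : ℚ))⁻¹ = ((a : ℚ))⁻¹ + ((b : ℚ))⁻¹ + ((c : ℚ))⁻¹ →
      ((a : ℚ))⁻¹ + ((b : ℚ))⁻¹ + ((c : ℚ))⁻¹ ≤ 23 / 24 := by
    intro x y z hx hxy hyz he
    have := key x y z hx hxy hyz (by rw [he]; exact h1) (by rw [he]; exact h2)
    linarith
  rcases le_total a b with hab | hab <;> rcases le_total b c with hbc | hbc <;>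
    rcases le_total a c with hac | hac <;>
  first
    | exact H a b c (by omega) (by omega) (by omega) (by ring)
    | exact H a c b (by omega) (by omega) (by omega) (by ring)
    | exact H b a c (by omega) (by omega) (by omega) (by ring)
    | exact H b c a (by omega) (by omega) (by omega) (by ring)
    | exact H c a b (by omega) (by omega) (by omega) (by ring)
    | exact H c b a (by omega) (by omega) (by omega) (by ring)

theorem riemannHurwitz_positive_ne_one_div_42_ge_one_div_24
    (ρ r : ℕ) (m : Fin r → ℕ) (hm : ∀ i, 2 ≤ m i)
    (E : ℚ) (hE : E = 2 * (ρ : ℚ) - 2 + ∑ i : Fin r, (1 - 1 / (m i : ℚ)))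
    (hpos : 0 < E) (hne : E ≠ 1 / 42) :
    1 / 24 ≤ E := by
  subst hE
  simp only [one_div] at hpos hne ⊢
  have hpos' : ∀ i : Fin r, (0 : ℚ) < ((m i : ℚ))⁻¹ := fun i => by
    apply inv_pos.mpr; exact_mod_cast (by have := hm i; omega : 0 < m i)
  have hlb : ∀ i : Fin r, (1 / 2 : ℚ) ≤ 1 - ((m i : ℚ))⁻¹ := fun i => by
    have := inv_cast_le (show 0 < 2 by norm_num) (hm i)
    norm_num at this
    linarith
  have hsum_lb : (r : ℚ) * (1 / 2) ≤ ∑ i : Fin r, (1 - ((m i : ℚ))⁻¹) := by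
    calc (r : ℚ) * (1 / 2) = ∑ _i : Fin r, (1 / 2 : ℚ) := by
          simp [Finset.sum_const, mul_comm]
      _ ≤ _ := Finset.sum_le_sum (fun i _ => hlb i)
  rcases Nat.lt_or_ge ρ 2 with hρ | hρ
  · interval_cases ρ
    · -- ρ = 0
      rcases le_or_gt 5 r with h5 | h5
      · have h5' : (5 : ℚ) ≤ r := by exact_mod_cast h5
        push_cast
        linarith [hsum_lb]
      · interval_cases r
        · norm_num at hpos
        · simp [Fin.sum_univ_one] at hpos ⊢
          linarith [hpos' 0]
        · simp [Fin.sum_univ_two] at hpos ⊢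
          linarith [hpos' 0, hpos' 1]
        · simp [Fin.sum_univ_three] at hpos hne ⊢
          have hlt : ((m 0 : ℚ))⁻¹ + ((m 1 : ℚ))⁻¹ + ((m 2 : ℚ))⁻¹ < 1 := by linarith
          have hne' : ((m 0 : ℚ))⁻¹ + ((m 1 : ℚ))⁻¹ + ((m 2 : ℚ))⁻¹ ≠ 41 / 42 := by
            intro h; apply hne; linarith
          have := key' (m 0) (m 1) (m 2) (hm 0) (hm 1) (hm 2) hlt hne'
          linarith
        · -- r = 4
          by_cases hall : ∀ i : Fin 4, m i = 2
          · exfalso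
            simp [Fin.sum_univ_four, hall] at hpos
            norm_num at hpos
          · push_neg at hall
            obtain ⟨i, hi⟩ := hall
            have h3 : 3 ≤ m i := by have := hm i; omega
            have hbig : (2 / 3 : ℚ) ≤ 1 - ((m i : ℚ))⁻¹ := by
              have := inv_cast_le (show 0 < 3 by norm_num) h3
              norm_num at this
              linarith
            simp [Fin.sum_univ_four]
            fin_cases i <;>
              first
                | (have hb : (2 / 3 : ℚ) ≤ 1 - ((m (0 : Fin 4) : ℚ))⁻¹ := hbig
                   linarith [hlb 1, hlb 2, hlb 3])
                | (have hb : (2 / 3 : ℚ) ≤ 1 - ((m (1 : Fin 4) : ℚ))⁻¹ := hbig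
                   linarith [hlb 0, hlb 2, hlb 3])
                | (have hb : (2 / 3 : ℚ) ≤ 1 - ((m (2 : Fin 4) : ℚ))⁻¹ := hbig
                   linarith [hlb 0, hlb 1, hlb 3])
                | (have hb : (2 / 3 : ℚ) ≤ 1 - ((m (3 : Fin 4) : ℚ))⁻¹ := hbig
                   linarith [hlb 0, hlb 1, hlb 2])
    · -- ρ = 1
      rcases Nat.eq_zero_or_pos r with h | h
      · subst h
        simp at hpos
      · have h1' : (1 : ℚ) ≤ r := by exact_mod_cast h
        push_cast
        linarith [hsum_lb]
  · have h2 : (2 : ℚ) ≤ ρ := by exact_mod_cast hρ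
    have hs0 : (0 : ℚ) ≤ ∑ i : Fin r, (1 - ((m i : ℚ))⁻¹) :=
      le_trans (by positivity) hsum_lb
    linarith
end

section
/- Let σ be a natural number and let H_σ be the group with presentation ⟨x, y ∣ x⁴ = y^{2(σ+1)} = (xy)² = (x⁻¹y)² = 1⟩, realized as the presented group (PresentedGroup) on two generators x, y with relators x⁴, y^{2(σ+1)}, (xy)², (x⁻¹y)². Then every element of H_σ can be written as x^a · y^b with natural numbers a < 4 and b < 2(σ+1); consequently the cardinality of H_σ is at most 8(σ + 1). -/
private theorem accola_aux {G : Type*} [Group G] (x y : G) (n : ℕ) (hn : 0 < n)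
    (hx : x ^ 4 = 1) (hy : y ^ n = 1) (hxy : (x * y) ^ 2 = 1) (hxiy : (x⁻¹ * y) ^ 2 = 1)
    (g : G) (hg : g ∈ Subgroup.closure {x, y}) :
    ∃ a b : ℕ, a < 4 ∧ b < n ∧ g = x ^ a * y ^ b := by
  have hxy' : x * y * (x * y) = 1 := by rw [← pow_two]; exact hxy
  have hxiy' : x⁻¹ * y * (x⁻¹ * y) = 1 := by rw [← pow_two]; exact hxiy
  -- basic swap rules
  have h1 : y * x = x⁻¹ * y⁻¹ := by
    have e : x⁻¹ * (x * y * (x * y)) * y⁻¹ = y * x := by group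
    rw [hxy'] at e; rw [← e]; group
  have h2 : y * x⁻¹ = x * y⁻¹ := by
    have e : x * (x⁻¹ * y * (x⁻¹ * y)) * y⁻¹ = y * x⁻¹ := by group
    rw [hxiy'] at e; rw [← e]; group
  have h3 : y⁻¹ * x = x⁻¹ * y := by
    have e : (x⁻¹ * y * (x⁻¹ * y))⁻¹ * (x⁻¹ * y) = y⁻¹ * x := by group
    rw [hxiy'] at e; rw [← e]; group
  have h4 : y⁻¹ * x⁻¹ = x * y := by
    have e : (x * y * (x * y))⁻¹ * (x * y) = y⁻¹ * x⁻¹ := by group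
    rw [hxy'] at e; rw [← e]; group
  -- moving a power of y past x or x⁻¹
  have key : ∀ b : ℕ,
      (y ^ b * x = x * (y ^ b)⁻¹ ∧ y ^ b * x⁻¹ = x⁻¹ * (y ^ b)⁻¹) ∨
      (y ^ b * x = x⁻¹ * (y ^ b)⁻¹ ∧ y ^ b * x⁻¹ = x * (y ^ b)⁻¹) := by
    intro b
    induction b with
    | zero => left; simp
    | succ b ih =>
      rcases ih with ⟨i1, i2⟩ | ⟨i1, i2⟩
      · right
        constructor
        · calc y ^ (b + 1) * x = y ^ b * (y * x) := by rw [pow_succ]; group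
            _ = y ^ b * x⁻¹ * y⁻¹ := by rw [h1]; group
            _ = x⁻¹ * (y ^ (b + 1))⁻¹ := by rw [i2, pow_succ]; group
        · calc y ^ (b + 1) * x⁻¹ = y ^ b * (y * x⁻¹) := by rw [pow_succ]; group
            _ = y ^ b * x * y⁻¹ := by rw [h2]; group
            _ = x * (y ^ (b + 1))⁻¹ := by rw [i1, pow_succ]; group
      · left
        constructor
        · calc y ^ (b + 1) * x = y ^ b * (y * x) := by rw [pow_succ]; group
            _ = y ^ b * x⁻¹ * y⁻¹ := by rw [h1]; group
            _ = x * (y ^ (b + 1))⁻¹ := by rw [i2, pow_succ]; group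
        · calc y ^ (b + 1) * x⁻¹ = y ^ b * (y * x⁻¹) := by rw [pow_succ]; group
            _ = y ^ b * x * y⁻¹ := by rw [h2]; group
            _ = x⁻¹ * (y ^ (b + 1))⁻¹ := by rw [i1, pow_succ]; group
  -- inverses of powers are powers
  have invy : ∀ b : ℕ, ∃ c : ℕ, (y ^ b)⁻¹ = y ^ c := by
    intro b
    refine ⟨n - b % n, ?_⟩
    rw [inv_eq_iff_mul_eq_one, ← pow_add]
    have hdm := Nat.div_add_mod b n
    have hbn : b % n < n := Nat.mod_lt b hn
    have : b + (n - b % n) = n * (b / n) + n := by omega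
    rw [this, pow_add, pow_mul, hy]
    simp
  have invx : x⁻¹ = x ^ 3 := by
    rw [eq_comm, eq_inv_iff_mul_eq_one, ← pow_succ, hx]
  -- normal form without bounds, by induction on the word
  have main : ∃ a b : ℕ, g = x ^ a * y ^ b := by
    induction hg using Subgroup.closure_induction_right with
    | one => exact ⟨0, 0, by simp⟩
    | mul_right w hw z hz ih =>
      obtain ⟨a, b, rfl⟩ := ih
      rcases hz with rfl | rfl
      · rcases key b with ⟨k, -⟩ | ⟨k, -⟩
        · obtain ⟨c, hc⟩ := invy b
          exact ⟨a + 1, c, by rw [mul_assoc, k, hc, pow_succ]; group⟩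
        · obtain ⟨c, hc⟩ := invy b
          exact ⟨a + 3, c, by rw [mul_assoc, k, hc, invx, pow_add]; group⟩
      · exact ⟨a, b + 1, by rw [pow_succ]; group⟩
    | mul_inv_cancel w hw z hz ih =>
      obtain ⟨a, b, rfl⟩ := ih
      rcases hz with rfl | rfl
      · rcases key b with ⟨-, k⟩ | ⟨-, k⟩
        · obtain ⟨c, hc⟩ := invy b
          exact ⟨a + 3, c, by rw [mul_assoc, k, hc, invx, pow_add]; group⟩
        · obtain ⟨c, hc⟩ := invy b
          exact ⟨a + 1, c, by rw [mul_assoc, k, hc, pow_succ]; group⟩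
      · obtain ⟨c, hc⟩ := invy 1
        refine ⟨a, b + c, ?_⟩
        rw [pow_add, ← hc, pow_one]; group
  obtain ⟨a, b, rfl⟩ := main
  exact ⟨a % 4, b % n, Nat.mod_lt _ (by norm_num), Nat.mod_lt _ hn,
    by rw [← pow_eq_pow_mod _ hx, ← pow_eq_pow_mod _ hy]⟩

/-- The relators of the presentation
`⟨x, y ∣ x⁴ = y^(2(σ+1)) = (xy)² = (x⁻¹y)² = 1⟩`, where `x` corresponds to the
generator `true` and `y` to the generator `false`. -/
def accolaMaclachlanRels (σ : ℕ) : Set (FreeGroup Bool) :=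
  {FreeGroup.of true ^ 4, FreeGroup.of false ^ (2 * (σ + 1)),
    (FreeGroup.of true * FreeGroup.of false) ^ 2,
    ((FreeGroup.of true)⁻¹ * FreeGroup.of false) ^ 2}

theorem accolaMaclachlan_normal_form_and_card
    (σ : ℕ) :
    (∀ g : PresentedGroup (accolaMaclachlanRels σ),
      ∃ a b : ℕ, a < 4 ∧ b < 2 * (σ + 1) ∧
        g = PresentedGroup.of true ^ a * PresentedGroup.of false ^ b) ∧
    Nat.card (PresentedGroup (accolaMaclachlanRels σ)) ≤ 8 * (σ + 1) := by
  set rels := accolaMaclachlanRels σ with hrels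
  set x : PresentedGroup rels := PresentedGroup.of true with hxdef
  set y : PresentedGroup rels := PresentedGroup.of false with hydef
  have hone : ∀ r ∈ rels, PresentedGroup.mk rels r = 1 := fun r hr =>
    (QuotientGroup.eq_one_iff r).2 (Subgroup.subset_normalClosure hr)
  have hofeq : ∀ b : Bool, (PresentedGroup.of b : PresentedGroup rels)
      = PresentedGroup.mk rels (FreeGroup.of b) := fun _ => rfl
  have hx : x ^ 4 = 1 := by
    rw [hxdef, hofeq, ← map_pow]
    exact hone _ (by simp [hrels, accolaMaclachlanRels])
  have hy : y ^ (2 * (σ + 1)) = 1 := by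
    rw [hydef, hofeq, ← map_pow]
    exact hone _ (by simp [hrels, accolaMaclachlanRels])
  have hxy : (x * y) ^ 2 = 1 := by
    rw [hxdef, hydef, hofeq, hofeq, ← map_mul, ← map_pow]
    exact hone _ (by simp [hrels, accolaMaclachlanRels])
  have hxiy : (x⁻¹ * y) ^ 2 = 1 := by
    rw [hxdef, hydef, hofeq, hofeq, ← map_inv, ← map_mul, ← map_pow]
    exact hone _ (by simp [hrels, accolaMaclachlanRels])
  have hclos : ∀ g : PresentedGroup rels, g ∈ Subgroup.closure {x, y} := by
    intro g
    have : Set.range (PresentedGroup.of : Bool → PresentedGroup rels) = {x, y} := by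
      ext z
      simp only [Set.mem_range, Bool.exists_bool, Set.mem_insert_iff, Set.mem_singleton_iff,
        hxdef, hydef]
      tauto
    rw [← this, PresentedGroup.closure_range_of]
    trivial
  have hmain : ∀ g : PresentedGroup rels,
      ∃ a b : ℕ, a < 4 ∧ b < 2 * (σ + 1) ∧ g = x ^ a * y ^ b := fun g =>
    accola_aux x y (2 * (σ + 1)) (by positivity) hx hy hxy hxiy g (hclos g)
  refine ⟨hmain, ?_⟩
  have hsurj : Function.Surjective
      (fun p : Fin 4 × Fin (2 * (σ + 1)) => x ^ (p.1 : ℕ) * y ^ (p.2 : ℕ)) := by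
    intro g
    obtain ⟨a, b, ha, hb, rfl⟩ := hmain g
    exact ⟨(⟨a, ha⟩, ⟨b, hb⟩), rfl⟩
  calc Nat.card (PresentedGroup rels) ≤ Nat.card (Fin 4 × Fin (2 * (σ + 1))) :=
        Nat.card_le_card_of_surjective _ hsurj
    _ = 8 * (σ + 1) := by simp [Nat.card_eq_fintype_card]; ring
end

section
/- Let G be a group and H a subgroup of G of finite index m ≥ 1 such that H is generated (as a subgroup of G) by a finite set S of cardinality d, i.e. H = Subgroup.closure S with S a finset of cardinality d. Then G is generated by at most d + ⌈log₂ m⌉ elements: there exists a finset T of G with T.card ≤ d + Nat.clog 2 m and Subgroup.closure T = ⊤. -/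
open Subgroup

lemma clog_step {m' m : ℕ} (h1 : 1 ≤ m') (h2 : 2 * m' ≤ m) :
    Nat.clog 2 m' + 1 ≤ Nat.clog 2 m := by
  have key : 2 ^ (Nat.clog 2 m') < 2 * m' := by
    rcases eq_or_lt_of_le h1 with h | h
    · simp [← h, Nat.clog_one_right]
    · have hc : 1 ≤ Nat.clog 2 m' := Nat.clog_pos (by norm_num) h
      have hlt := Nat.pow_pred_clog_lt_self (by norm_num : 1 < 2) h
      rw [Nat.pred_eq_sub_one] at hlt
      calc 2 ^ Nat.clog 2 m' = 2 ^ (Nat.clog 2 m' - 1 + 1) := by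
            rw [Nat.sub_add_cancel hc]
        _ = 2 * 2 ^ (Nat.clog 2 m' - 1) := by rw [pow_succ]; ring
        _ < 2 * m' := by omega
  have : 2 ^ (Nat.clog 2 m') < m := lt_of_lt_of_le key h2
  exact (Nat.lt_clog_iff_pow_lt (by norm_num)).mpr this

lemma gen_aux (G : Type*) [Group G] :
    ∀ m : ℕ, ∀ H : Subgroup G, ∀ S : Finset G, H.index = m → 1 ≤ m →
      Subgroup.closure (S : Set G) = H →
      ∃ T : Finset G, T.card ≤ S.card + Nat.clog 2 m ∧
        Subgroup.closure (T : Set G) = ⊤ := by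
  intro m
  induction m using Nat.strong_induction_on with
  | _ m ih =>
  intro H S hm hm1 hSH
  classical
  rcases eq_or_lt_of_le hm1 with h1 | h2
  · -- m = 1, H = ⊤
    have : H = ⊤ := Subgroup.index_eq_one.mp (by omega)
    exact ⟨S, by simp [Nat.clog_one_right], by rw [hSH, this]⟩
  · -- m ≥ 2
    have hHne : H ≠ ⊤ := fun h => by
      rw [h, Subgroup.index_top] at hm; omega
    obtain ⟨g, hg⟩ : ∃ g, g ∉ H := by
      by_contra h
      push_neg at h
      exact hHne (Subgroup.eq_top_iff' H |>.mpr h)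
    set H' : Subgroup G := Subgroup.closure (insert g (S : Set G)) with hH'
    have hle : H ≤ H' := by
      rw [← hSH]
      exact Subgroup.closure_mono (Set.subset_insert _ _)
    have hgH' : g ∈ H' := Subgroup.subset_closure (Set.mem_insert _ _)
    have hrel : H.relIndex H' * H'.index = m := by
      rw [Subgroup.relIndex_mul_index hle, hm]
    have hr2 : 2 ≤ H.relIndex H' := by
      have hne1 : H.relIndex H' ≠ 1 := fun h => hg (Subgroup.relIndex_eq_one.mp h hgH')
      have hne0 : H.relIndex H' ≠ 0 := fun h => by rw [h] at hrel; omega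
      omega
    set m' := H'.index with hm'
    have hm'1 : 1 ≤ m' := by
      rcases Nat.eq_zero_or_pos m' with h | h
      · rw [h, mul_zero] at hrel; omega
      · exact h
    have hm'lt : 2 * m' ≤ m := by nlinarith
    obtain ⟨T, hT1, hT2⟩ := ih m' (by omega) H' (insert g S) rfl hm'1 (by
      rw [Finset.coe_insert])
    refine ⟨T, ?_, hT2⟩
    calc T.card ≤ (insert g S).card + Nat.clog 2 m' := hT1
      _ ≤ (S.card + 1) + Nat.clog 2 m' := by
          gcongr; exact Finset.card_insert_le _ _
      _ = S.card + (Nat.clog 2 m' + 1) := by ring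
      _ ≤ S.card + Nat.clog 2 m := by
          gcongr; exact clog_step hm'1 hm'lt

theorem generators_of_group_from_finite_index_subgroup
    (G : Type*) [Group G] (H : Subgroup G) (m d : ℕ)
    (hm : H.index = m) (hm1 : 1 ≤ m)
    (S : Finset G) (hSd : S.card = d)
    (hSH : Subgroup.closure (S : Set G) = H) :
    ∃ T : Finset G, T.card ≤ d + Nat.clog 2 m ∧
      Subgroup.closure (T : Set G) = ⊤ := by
  subst hSd
  exact gen_aux G m H S hm hm1 hSH
end
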